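/- Let $U, V$ be $[0,1]$-valued random variables with $\mathbb{P}(U \le u, V \le v) = C(u,v)$ for a copula $C$. With the notation of the previous expectation identity, $\mathbb{E}\Big[K_1\big(\tfrac{u - \zeta_1(U)}{h}\big) K_2\big(\tfrac{v - \zeta_2(V)}{h}\big)\,\mathbb{1}\{U \le u, V \le v\}\Big] = \int_{-1}^{1}\int_{-1}^{1} C\big(\min(u, \zeta_1^{-1}(u - sh)),\ \min(v, \zeta_2^{-1}(v - th))\big)\,k_1(s)\,k_2(t)\,ds\,dt$. -/

import Mathlib

open MeasureTheory

private lemma aux_ite_meas {α : Type*} [MeasurableSpace α] {p : α → Prop} [DecidablePred p]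
    (hp : MeasurableSet {x | p x}) :
    Measurable (fun x => if p x then (1:ℝ) else 0) := by
  have : (fun x => if p x then (1:ℝ) else 0) = Set.indicator {x | p x} (fun _ => 1) := by
    funext x; by_cases hx : p x <;> simp [Set.indicator_apply, hx]
  rw [this]; exact measurable_const.indicator hp

private lemma aux_point (k : ℝ → ℝ) (hk_supp : ∀ s, s ∉ Set.Icc (-1:ℝ) 1 → k s = 0)
    (K : ℝ → ℝ) (hK : ∀ x, K x = ∫ s in Set.Iic x, k s)
    (ζt : ℝ → ℝ) (w u h : ℝ) (hh0 : 0 < h) :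
    K ((u - ζt w) / h) * (if w ≤ u then (1:ℝ) else 0)
      = ∫ s in Set.Icc (-1:ℝ) 1, k s * (if w ≤ u ∧ ζt w ≤ u - s * h then (1:ℝ) else 0) := by
  have hcdf : ∀ x, K x = ∫ s in Set.Icc (-1:ℝ) 1, (if s ≤ x then k s else 0) := by
    intro x
    have hind : Set.indicator (Set.Icc (-1:ℝ) 1) k = k := by
      funext s
      by_cases hs : s ∈ Set.Icc (-1:ℝ) 1 <;> simp [Set.indicator_apply, hs, hk_supp s]
    rw [hK]
    calc ∫ s in Set.Iic x, k s
        = ∫ s in Set.Iic x, Set.indicator (Set.Icc (-1:ℝ) 1) k s := by rw [hind]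
      _ = ∫ s in Set.Iic x ∩ Set.Icc (-1:ℝ) 1, k s := setIntegral_indicator measurableSet_Icc
      _ = ∫ s in Set.Icc (-1:ℝ) 1 ∩ Set.Iic x, k s := by rw [Set.inter_comm]
      _ = ∫ s in Set.Icc (-1:ℝ) 1, Set.indicator (Set.Iic x) k s :=
          (setIntegral_indicator measurableSet_Iic).symm
      _ = ∫ s in Set.Icc (-1:ℝ) 1, (if s ≤ x then k s else 0) := by
          refine integral_congr_ae (Filter.Eventually.of_forall fun s => ?_)
          simp [Set.indicator_apply]
  by_cases hw : w ≤ u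
  · rw [if_pos hw, mul_one, hcdf]
    refine integral_congr_ae (Filter.Eventually.of_forall fun s => ?_)
    dsimp only
    have hiff : (w ≤ u ∧ ζt w ≤ u - s * h) ↔ s ≤ (u - ζt w) / h := by
      rw [le_div_iff₀ hh0]
      constructor
      · rintro ⟨-, h2⟩; linarith
      · intro h1; exact ⟨hw, by linarith⟩
    by_cases hc : s ≤ (u - ζt w) / h
    · rw [if_pos hc, if_pos (hiff.mpr hc), mul_one]
    · rw [if_neg hc, if_neg (fun hc2 => hc (hiff.mp hc2)), mul_zero]
  · rw [if_neg hw, mul_zero]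
    symm
    have hz : ∀ s : ℝ, k s * (if w ≤ u ∧ ζt w ≤ u - s * h then (1:ℝ) else 0) = 0 := fun s => by
      rw [if_neg (fun hc => hw hc.1), mul_zero]
    simp only [hz, integral_zero]

private lemma aux_int {Ω : Type*} [MeasureSpace Ω] [IsProbabilityMeasure (volume : Measure Ω)]
    (k : ℝ → ℝ) (hk_pos : ∀ s, 0 ≤ k s) (hk_int : Integrable k)
    (φ : Ω × ℝ → ℝ)
    (hφ : AEStronglyMeasurable φ
      ((volume : Measure Ω).prod (volume.restrict (Set.Icc (-1:ℝ) 1))))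
    (hφ_bd : ∀ z, ‖φ z‖ ≤ 1) :
    Integrable (fun z : Ω × ℝ => k z.2 * φ z)
      ((volume : Measure Ω).prod (volume.restrict (Set.Icc (-1:ℝ) 1))) := by
  have hmaj : Integrable (fun z : Ω × ℝ => k z.2)
      ((volume : Measure Ω).prod (volume.restrict (Set.Icc (-1:ℝ) 1))) := by
    have := (integrable_const (1:ℝ) (μ := (volume : Measure Ω))).mul_prod (hk_int.integrableOn (s := Set.Icc (-1:ℝ) 1))
    simpa using this
  refine hmaj.mono' (((hk_int.integrableOn (s := Set.Icc (-1:ℝ) 1)).aestronglyMeasurable.comp_snd).mul hφ) ?_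
  refine Filter.Eventually.of_forall fun z => ?_
  rw [norm_mul, Real.norm_of_nonneg (hk_pos _)]
  calc k z.2 * ‖φ z‖ ≤ k z.2 * 1 := mul_le_mul_of_nonneg_left (hφ_bd z) (hk_pos _)
    _ = k z.2 := mul_one _

theorem stmt_9 {Ω : Type*} [MeasureSpace Ω] [IsProbabilityMeasure (volume : Measure Ω)]
    (U V : Ω → ℝ) (hU : Measurable U) (hV : Measurable V)
    (hU_range : ∀ ω, U ω ∈ Set.Icc (0:ℝ) 1) (hV_range : ∀ ω, V ω ∈ Set.Icc (0:ℝ) 1)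
    (C : ℝ → ℝ → ℝ)
    (hC : ∀ u v, (volume {ω | U ω ≤ u ∧ V ω ≤ v}).toReal = C u v)
    (k₁ k₂ : ℝ → ℝ)
    (hk₁_pos : ∀ s, 0 ≤ k₁ s) (hk₂_pos : ∀ t, 0 ≤ k₂ t)
    (hk₁_supp : ∀ s, s ∉ Set.Icc (-1:ℝ) 1 → k₁ s = 0)
    (hk₂_supp : ∀ t, t ∉ Set.Icc (-1:ℝ) 1 → k₂ t = 0)
    (hk₁_int : Integrable k₁) (hk₂_int : Integrable k₂)
    (hk₁_one : ∫ s, k₁ s = 1) (hk₂_one : ∫ t, k₂ t = 1)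
    (K₁ K₂ : ℝ → ℝ)
    (hK₁ : ∀ x, K₁ x = ∫ s in Set.Iic x, k₁ s)
    (hK₂ : ∀ x, K₂ x = ∫ t in Set.Iic x, k₂ t)
    (ζ₁ ζ₂ ζ₁inv ζ₂inv : ℝ → ℝ)
    (hζ₁_mono : MonotoneOn ζ₁ (Set.Icc 0 1)) (hζ₂_mono : MonotoneOn ζ₂ (Set.Icc 0 1))
    (hgal₁ : ∀ x ∈ Set.Icc (0:ℝ) 1, ∀ y : ℝ, ζ₁ x ≤ y ↔ x ≤ ζ₁inv y)
    (hgal₂ : ∀ x ∈ Set.Icc (0:ℝ) 1, ∀ y : ℝ, ζ₂ x ≤ y ↔ x ≤ ζ₂inv y)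
    (u v : ℝ) (hu : u ∈ Set.Icc (0:ℝ) 1) (hv : v ∈ Set.Icc (0:ℝ) 1)
    (h : ℝ) (hh : h ∈ Set.Ioo (0:ℝ) 1) :
    ∫ ω, K₁ ((u - ζ₁ (U ω)) / h) * K₂ ((v - ζ₂ (V ω)) / h) *
        (if U ω ≤ u ∧ V ω ≤ v then (1:ℝ) else 0) =
      ∫ s in Set.Icc (-1:ℝ) 1, ∫ t in Set.Icc (-1:ℝ) 1,
        C (min u (ζ₁inv (u - s * h))) (min v (ζ₂inv (v - t * h))) * k₁ s * k₂ t := by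
  obtain ⟨hh0, hh1⟩ := hh
  -- monotone extensions of ζ₁, ζ₂
  have hext : ∀ ζ : ℝ → ℝ, MonotoneOn ζ (Set.Icc 0 1) →
      ∃ f : ℝ → ℝ, Monotone f ∧ ∀ x ∈ Set.Icc (0:ℝ) 1, f x = ζ x := by
    intro ζ hζ
    refine ⟨fun x => ζ (max 0 (min 1 x)), ?_, ?_⟩
    · intro x y hxy
      exact hζ ⟨le_max_left _ _, max_le zero_le_one (min_le_left _ _)⟩
        ⟨le_max_left _ _, max_le zero_le_one (min_le_left _ _)⟩
        (max_le_max le_rfl (min_le_min le_rfl hxy))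
    · intro x hx
      simp only [min_eq_right hx.2, max_eq_right hx.1]
  obtain ⟨ζt₁, hζt₁_mono, hζt₁_eq⟩ := hext ζ₁ hζ₁_mono
  obtain ⟨ζt₂, hζt₂_mono, hζt₂_eq⟩ := hext ζ₂ hζ₂_mono
  have hζt₁U : ∀ ω, ζt₁ (U ω) = ζ₁ (U ω) := fun ω => hζt₁_eq _ (hU_range ω)
  have hζt₂V : ∀ ω, ζt₂ (V ω) = ζ₂ (V ω) := fun ω => hζt₂_eq _ (hV_range ω)
  -- properties of K₂
  have hK₂_mono : Monotone K₂ := by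
    intro x y hxy
    rw [hK₂ x, hK₂ y]
    exact setIntegral_mono_set hk₂_int.integrableOn
      (Filter.Eventually.of_forall hk₂_pos) ((Set.Iic_subset_Iic.2 hxy).eventuallyLE)
  have hK₂_nonneg : ∀ x, 0 ≤ K₂ x := fun x => by
    rw [hK₂]; exact setIntegral_nonneg measurableSet_Iic fun s _ => hk₂_pos s
  have hK₂_le_one : ∀ x, K₂ x ≤ 1 := fun x => by
    rw [hK₂, ← hk₂_one]
    exact setIntegral_le_integral hk₂_int (Filter.Eventually.of_forall hk₂_pos)
  -- the function g
  set g : Ω → ℝ := fun ω => K₂ ((v - ζt₂ (V ω)) / h) * (if V ω ≤ v then (1:ℝ) else 0)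
    with hg_def
  have hg_meas : Measurable g := by
    refine Measurable.mul ?_ ?_
    · exact hK₂_mono.measurable.comp
        ((measurable_const.sub (hζt₂_mono.measurable.comp hV)).div_const h)
    · exact aux_ite_meas (measurableSet_le hV measurable_const)
  have hg_bd : ∀ ω, ‖g ω‖ ≤ 1 := by
    intro ω
    have h1 : 0 ≤ K₂ ((v - ζt₂ (V ω)) / h) := hK₂_nonneg _
    have h2 : K₂ ((v - ζt₂ (V ω)) / h) ≤ 1 := hK₂_le_one _
    by_cases hω : V ω ≤ v
    · simp only [hg_def, hω, if_true, mul_one]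
      rw [Real.norm_of_nonneg h1]; exact h2
    · simp [hg_def, hω]
  -- expansion of g
  have hg_exp : ∀ ω, g ω
      = ∫ t in Set.Icc (-1:ℝ) 1, k₂ t * (if V ω ≤ v ∧ ζt₂ (V ω) ≤ v - t * h then (1:ℝ) else 0) :=
    fun ω => aux_point k₂ hk₂_supp K₂ hK₂ ζt₂ (V ω) v h hh0
  -- indicator measurability
  have hχ₁_joint : Measurable
      (fun z : Ω × ℝ => if U z.1 ≤ u ∧ ζt₁ (U z.1) ≤ u - z.2 * h then (1:ℝ) else 0) :=
    aux_ite_meas ((measurableSet_le (hU.comp measurable_fst) measurable_const).inter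
      (measurableSet_le (hζt₁_mono.measurable.comp (hU.comp measurable_fst))
        (measurable_const.sub (measurable_snd.mul_const h))))
  have hχ₂_joint : Measurable
      (fun z : Ω × ℝ => if V z.1 ≤ v ∧ ζt₂ (V z.1) ≤ v - z.2 * h then (1:ℝ) else 0) :=
    aux_ite_meas ((measurableSet_le (hV.comp measurable_fst) measurable_const).inter
      (measurableSet_le (hζt₂_mono.measurable.comp (hV.comp measurable_fst))
        (measurable_const.sub (measurable_snd.mul_const h))))
  have hχ₁_fix : ∀ s : ℝ, Measurable
      (fun ω => if U ω ≤ u ∧ ζt₁ (U ω) ≤ u - s * h then (1:ℝ) else 0) := fun s =>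
    aux_ite_meas ((measurableSet_le hU measurable_const).inter
      (measurableSet_le (hζt₁_mono.measurable.comp hU) measurable_const))
  have hite_bd : ∀ (p : Prop) [Decidable p], ‖if p then (1:ℝ) else 0‖ ≤ 1 := by
    intro p _; by_cases hp : p <;> simp [hp]
  -- indicator integral
  have hPind : ∀ A B : ℝ, (∫ ω, (if U ω ≤ A ∧ V ω ≤ B then (1:ℝ) else 0)) = C A B := by
    intro A B
    have hs : MeasurableSet {ω | U ω ≤ A ∧ V ω ≤ B} :=
      (measurableSet_le hU measurable_const).inter (measurableSet_le hV measurable_const)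
    rw [← hC A B, ← measureReal_def, ← integral_indicator_one hs]
    refine integral_congr_ae (Filter.Eventually.of_forall fun ω => ?_)
    by_cases hω : U ω ≤ A ∧ V ω ≤ B <;> simp [Set.indicator_apply, Set.mem_setOf_eq, hω]
  -- step 1 : expand the integrand
  calc ∫ ω, K₁ ((u - ζ₁ (U ω)) / h) * K₂ ((v - ζ₂ (V ω)) / h) *
        (if U ω ≤ u ∧ V ω ≤ v then (1:ℝ) else 0)
      = ∫ ω, ∫ s in Set.Icc (-1:ℝ) 1,
          k₁ s * ((if U ω ≤ u ∧ ζt₁ (U ω) ≤ u - s * h then (1:ℝ) else 0) * g ω) := by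
        refine integral_congr_ae (Filter.Eventually.of_forall fun ω => ?_)
        have hsplit : (if U ω ≤ u ∧ V ω ≤ v then (1:ℝ) else 0)
            = (if U ω ≤ u then (1:ℝ) else 0) * (if V ω ≤ v then (1:ℝ) else 0) := by
          by_cases h1 : U ω ≤ u <;> by_cases h2 : V ω ≤ v <;> simp [h1, h2]
        have hgω : g ω = K₂ ((v - ζ₂ (V ω)) / h) * (if V ω ≤ v then (1:ℝ) else 0) := by
          rw [hg_def]; simp only; rw [hζt₂V ω]
        calc K₁ ((u - ζ₁ (U ω)) / h) * K₂ ((v - ζ₂ (V ω)) / h) *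
              (if U ω ≤ u ∧ V ω ≤ v then (1:ℝ) else 0)
            = (K₁ ((u - ζ₁ (U ω)) / h) * (if U ω ≤ u then (1:ℝ) else 0)) * g ω := by
              rw [hsplit, hgω]; ring
          _ = (∫ s in Set.Icc (-1:ℝ) 1,
                k₁ s * (if U ω ≤ u ∧ ζt₁ (U ω) ≤ u - s * h then (1:ℝ) else 0)) * g ω := by
              rw [← hζt₁U ω, aux_point k₁ hk₁_supp K₁ hK₁ ζt₁ (U ω) u h hh0]
          _ = ∫ s in Set.Icc (-1:ℝ) 1,
                k₁ s * (if U ω ≤ u ∧ ζt₁ (U ω) ≤ u - s * h then (1:ℝ) else 0) * g ω :=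
              (integral_mul_const _ _).symm
          _ = ∫ s in Set.Icc (-1:ℝ) 1,
                k₁ s * ((if U ω ≤ u ∧ ζt₁ (U ω) ≤ u - s * h then (1:ℝ) else 0) * g ω) := by
              simp only [mul_assoc]
    _ = ∫ s in Set.Icc (-1:ℝ) 1, ∫ ω,
          k₁ s * ((if U ω ≤ u ∧ ζt₁ (U ω) ≤ u - s * h then (1:ℝ) else 0) * g ω) := by
        refine integral_integral_swap ?_
        refine aux_int k₁ hk₁_pos hk₁_int
          (fun z => (if U z.1 ≤ u ∧ ζt₁ (U z.1) ≤ u - z.2 * h then (1:ℝ) else 0) * g z.1)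
          ((hχ₁_joint.mul (hg_meas.comp measurable_fst)).aestronglyMeasurable) ?_
        intro z
        rw [norm_mul]
        calc ‖(if U z.1 ≤ u ∧ ζt₁ (U z.1) ≤ u - z.2 * h then (1:ℝ) else 0)‖ * ‖g z.1‖
            ≤ 1 * 1 := mul_le_mul (hite_bd _) (hg_bd _) (norm_nonneg _) zero_le_one
          _ = 1 := one_mul 1
    _ = ∫ s in Set.Icc (-1:ℝ) 1, ∫ t in Set.Icc (-1:ℝ) 1,
          C (min u (ζ₁inv (u - s * h))) (min v (ζ₂inv (v - t * h))) * k₁ s * k₂ t := by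
        refine integral_congr_ae (Filter.Eventually.of_forall fun s => ?_)
        dsimp only
        rw [integral_const_mul]
        have inner : (∫ ω, (if U ω ≤ u ∧ ζt₁ (U ω) ≤ u - s * h then (1:ℝ) else 0) * g ω)
            = ∫ t in Set.Icc (-1:ℝ) 1,
                C (min u (ζ₁inv (u - s * h))) (min v (ζ₂inv (v - t * h))) * k₂ t := by
          calc ∫ ω, (if U ω ≤ u ∧ ζt₁ (U ω) ≤ u - s * h then (1:ℝ) else 0) * g ω
              = ∫ ω, ∫ t in Set.Icc (-1:ℝ) 1,
                  k₂ t * ((if U ω ≤ u ∧ ζt₁ (U ω) ≤ u - s * h then (1:ℝ) else 0) *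
                    (if V ω ≤ v ∧ ζt₂ (V ω) ≤ v - t * h then (1:ℝ) else 0)) := by
                refine integral_congr_ae (Filter.Eventually.of_forall fun ω => ?_)
                dsimp only
                rw [hg_exp ω, ← integral_const_mul]
                refine integral_congr_ae (Filter.Eventually.of_forall fun t => ?_)
                dsimp only
                ring
            _ = ∫ t in Set.Icc (-1:ℝ) 1, ∫ ω,
                  k₂ t * ((if U ω ≤ u ∧ ζt₁ (U ω) ≤ u - s * h then (1:ℝ) else 0) *
                    (if V ω ≤ v ∧ ζt₂ (V ω) ≤ v - t * h then (1:ℝ) else 0)) := by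
                refine integral_integral_swap ?_
                refine aux_int k₂ hk₂_pos hk₂_int
                  (fun z => (if U z.1 ≤ u ∧ ζt₁ (U z.1) ≤ u - s * h then (1:ℝ) else 0) *
                    (if V z.1 ≤ v ∧ ζt₂ (V z.1) ≤ v - z.2 * h then (1:ℝ) else 0))
                  ((((hχ₁_fix s).comp measurable_fst).mul hχ₂_joint).aestronglyMeasurable) ?_
                intro z
                rw [norm_mul]
                calc ‖(if U z.1 ≤ u ∧ ζt₁ (U z.1) ≤ u - s * h then (1:ℝ) else 0)‖ *
                      ‖(if V z.1 ≤ v ∧ ζt₂ (V z.1) ≤ v - z.2 * h then (1:ℝ) else 0)‖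
                    ≤ 1 * 1 := mul_le_mul (hite_bd _) (hite_bd _) (norm_nonneg _) zero_le_one
                  _ = 1 := one_mul 1
            _ = ∫ t in Set.Icc (-1:ℝ) 1,
                  C (min u (ζ₁inv (u - s * h))) (min v (ζ₂inv (v - t * h))) * k₂ t := by
                refine integral_congr_ae (Filter.Eventually.of_forall fun t => ?_)
                dsimp only
                rw [integral_const_mul]
                have hprod : ∀ ω,
                    (if U ω ≤ u ∧ ζt₁ (U ω) ≤ u - s * h then (1:ℝ) else 0) *
                      (if V ω ≤ v ∧ ζt₂ (V ω) ≤ v - t * h then (1:ℝ) else 0)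
                    = (if U ω ≤ min u (ζ₁inv (u - s * h)) ∧ V ω ≤ min v (ζ₂inv (v - t * h))
                        then (1:ℝ) else 0) := by
                  intro ω
                  have hiff : ((U ω ≤ u ∧ ζt₁ (U ω) ≤ u - s * h) ∧
                        (V ω ≤ v ∧ ζt₂ (V ω) ≤ v - t * h))
                      ↔ (U ω ≤ min u (ζ₁inv (u - s * h)) ∧ V ω ≤ min v (ζ₂inv (v - t * h))) := by
                    rw [le_min_iff, le_min_iff, hζt₁U ω, hζt₂V ω,
                      hgal₁ (U ω) (hU_range ω), hgal₂ (V ω) (hV_range ω)]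
                  rw [← if_congr hiff rfl rfl]
                  by_cases h1 : U ω ≤ u ∧ ζt₁ (U ω) ≤ u - s * h <;>
                    by_cases h2 : V ω ≤ v ∧ ζt₂ (V ω) ≤ v - t * h <;> simp [h1, h2]
                simp only [hprod]
                rw [hPind, mul_comm]
        rw [inner, ← integral_const_mul]
        refine integral_congr_ae (Filter.Eventually.of_forall fun t => ?_)
        dsimp only
        ring
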